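/- If 1 ≤ n/α ≤ 4/3 then T(n, α+1, 4) = n − α, assuming the Thomassé–Yeo inequality e(H) ≥ 4v(H) − (21/4)α(H) for all 4-graphs H and the known value T(5,4,4) ≤ 5 and T(4,4,4) ≤ 1 as building blocks. In particular, for integers n, α with α ≤ n ≤ 4α/3, the minimum number of edges in an n-vertex 4-graph with independence number at most α equals n − α. -/

import Mathlib

open Finset

/-- `turanT n k r` : minimum number of edges in an `r`-graph on `n` vertices with
independence number less than `k`; `⊤` if no such graph exists. -/
noncomputable def turanT (n k r : ℕ) : ℕ∞ :=
  sInf {c : ℕ∞ | ∃ E : Finset (Finset (Fin n)),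
    (∀ e ∈ E, e.card = r) ∧
    (∀ A : Finset (Fin n), A.card = k → ∃ e ∈ E, e ⊆ A) ∧
    (E.card : ℕ∞) = c}

/-- The independence number of a hypergraph given by its edge set. -/
noncomputable def indepNum {V : Type} [Fintype V] [DecidableEq V]
    (E : Finset (Finset V)) : ℕ :=
  ((Finset.univ : Finset V).powerset.filter fun A => ∀ e ∈ E, ¬ e ⊆ A).sup Finset.card

theorem stmt_5
    (hTY : ∀ (n : ℕ) (E : Finset (Finset (Fin n))), (∀ e ∈ E, e.card = 4) →
      ((n : ℚ) - indepNum E) ≤ (5 * n + 4 * E.card) / 21)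
    (hT5 : turanT 5 4 4 ≤ 5) (hT4 : turanT 4 4 4 ≤ 1)
    (n α : ℕ) (h1 : α ≤ n) (h2 : 3 * n ≤ 4 * α) :
    turanT n (α + 1) 4 = ((n - α : ℕ) : ℕ∞) := by
  classical
  set m := n - α with hm
  have h4m : 4 * m ≤ n := by omega
  have hfn : ∀ (i : Fin m) (j : Fin 4), 4 * (i : ℕ) + (j : ℕ) < n := by
    intro i j
    have := i.2
    have := j.2
    omega
  set F : Fin m → Fin 4 → Fin n := fun i j => ⟨4 * i + j, hfn i j⟩ with hF
  set edge : Fin m → Finset (Fin n) := fun i => univ.image (F i) with hedge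
  set E₀ : Finset (Finset (Fin n)) := univ.image edge with hE₀
  have hFmem : ∀ (i : Fin m) (j : Fin 4), F i j ∈ edge i := by
    intro i j; exact mem_image_of_mem _ (mem_univ _)
  have hedgecard : ∀ i : Fin m, (edge i).card = 4 := by
    intro i
    rw [hedge]
    rw [Finset.card_image_of_injective]
    · simp
    · intro j j' hjj'
      have : (4 * (i:ℕ) + j) = 4 * (i:ℕ) + j' := congrArg Fin.val hjj'
      exact Fin.ext (by omega)
  have hedgeinj : Function.Injective edge := by
    intro i i' hii'
    have h1' : F i 0 ∈ edge i' := hii' ▸ hFmem i 0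
    have h2' : F i' 0 ∈ edge i := hii' ▸ hFmem i' 0
    rw [hedge] at h1' h2'
    simp only [mem_image, mem_univ, true_and] at h1' h2'
    obtain ⟨j, hj⟩ := h1'
    obtain ⟨j', hj'⟩ := h2'
    have e1 : 4 * (i':ℕ) + (j:ℕ) = 4 * (i:ℕ) := congrArg Fin.val hj
    have e2 : 4 * (i:ℕ) + (j':ℕ) = 4 * (i':ℕ) := congrArg Fin.val hj'
    exact Fin.ext (by omega)
  have hE₀card : E₀.card = m := by
    rw [hE₀, Finset.card_image_of_injective _ hedgeinj, card_univ, Fintype.card_fin]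
  -- cover property
  have hcover : ∀ A : Finset (Fin n), A.card = α + 1 → ∃ e ∈ E₀, e ⊆ A := by
    intro A hA
    by_contra hno
    push_neg at hno
    have hAn : α + 1 ≤ n := by
      have := Finset.card_le_univ A
      simpa [hA] using this
    have hsel : ∀ i : Fin m, ∃ j : Fin 4, F i j ∈ Aᶜ := by
      intro i
      have := hno (edge i) (mem_image_of_mem _ (mem_univ _))
      rw [Finset.not_subset] at this
      obtain ⟨x, hx, hx'⟩ := this
      rw [hedge] at hx
      simp only [mem_image, mem_univ, true_and] at hx
      obtain ⟨j, hj⟩ := hx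
      exact ⟨j, by simp [hj, hx']⟩
    choose g hg using hsel
    have hinj : Set.InjOn (fun i => F i (g i)) (univ : Finset (Fin m)) := by
      intro i _ i' _ hii'
      have : 4 * (i:ℕ) + ((g i):ℕ) = 4 * (i':ℕ) + ((g i'):ℕ) := congrArg Fin.val hii'
      have := (g i).2
      have := (g i').2
      exact Fin.ext (by omega)
    have hle : m ≤ Aᶜ.card := by
      have := Finset.card_le_card_of_injOn (fun i => F i (g i))
        (fun i _ => hg i) hinj
      simpa using this
    rw [Finset.card_compl, hA, Fintype.card_fin] at hle
    omega
  -- lower bound for any admissible E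
  have hlow : ∀ E : Finset (Finset (Fin n)), (∀ e ∈ E, e.card = 4) →
      (∀ A : Finset (Fin n), A.card = α + 1 → ∃ e ∈ E, e ⊆ A) → m ≤ E.card := by
    intro E hcard4 hcov
    by_contra hlt
    push_neg at hlt
    set pick : Finset (Fin n) → Finset (Fin n) :=
      fun e => if h : e.Nonempty then {h.choose} else ∅ with hpick
    set T : Finset (Fin n) := E.biUnion pick with hT
    have hTcard : T.card ≤ E.card := by
      calc T.card ≤ ∑ e ∈ E, (pick e).card := Finset.card_biUnion_le
        _ ≤ ∑ e ∈ E, 1 := Finset.sum_le_sum (by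
            intro e _
            show (if h : e.Nonempty then ({h.choose} : Finset (Fin n)) else ∅).card ≤ 1
            split <;> simp)
        _ = E.card := by simp
    have hcompl : α + 1 ≤ Tᶜ.card := by
      rw [Finset.card_compl, Fintype.card_fin]
      omega
    obtain ⟨A, hAsub, hAcard⟩ := Finset.exists_subset_card_eq hcompl
    obtain ⟨e, heE, heA⟩ := hcov A hAcard
    have hne : e.Nonempty := by
      rw [← Finset.card_pos, hcard4 e heE]; norm_num
    have hxT : hne.choose ∈ T := by
      rw [hT, mem_biUnion]
      exact ⟨e, heE, by rw [hpick]; simp [hne]⟩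
    have hxA : hne.choose ∈ A := heA hne.choose_spec
    have := hAsub hxA
    simp [hxT] at this
  -- conclude
  rw [turanT]
  apply le_antisymm
  · exact sInf_le ⟨E₀, fun e he => by
      rw [hE₀] at he
      simp only [mem_image, mem_univ, true_and] at he
      obtain ⟨i, rfl⟩ := he
      exact hedgecard i, hcover, by rw [hE₀card]⟩
  · apply le_sInf
    rintro c ⟨E, hc4, hcov, rfl⟩
    exact_mod_cast hlow E hc4 hcov
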